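/- If α ∈ R^d has at least one irrational coordinate, then there exists a sequence of radii r_n ≥ 0 with ∑ r_n^d = ∞ such that for every x₀ ∈ T^d the set limsup_n T_α^{-n} B(x₀, r_n) is empty, where T_α is the translation by α on T^d. In particular, T_α does not have the shrinking target property. -/

import Mathlib

open MeasureTheory Filter Metric ENNReal Topology

lemma stmt5_dense {β : ℝ} (hβ : Irrational β) :
    DenseRange (fun n : ℕ => n • (β : AddCircle (1:ℝ))) := by
  rw [← denseRange_zsmul_iff_nsmul]
  have hS : Dense ((AddSubgroup.closure {β, 1} : AddSubgroup ℝ) : Set ℝ) := by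
    rcases AddSubgroup.dense_or_cyclic (AddSubgroup.closure {β, 1}) with h | ⟨a, ha⟩
    · exact h
    · exfalso
      have hβmem : β ∈ AddSubgroup.closure ({β, 1} : Set ℝ) :=
        AddSubgroup.subset_closure (by simp)
      have h1mem : (1:ℝ) ∈ AddSubgroup.closure ({β, 1} : Set ℝ) :=
        AddSubgroup.subset_closure (by simp)
      rw [ha, AddSubgroup.mem_closure_singleton] at hβmem h1mem
      obtain ⟨m, hm⟩ := hβmem
      obtain ⟨n, hn⟩ := h1mem
      have hn0 : n ≠ 0 := by rintro rfl; simp at hn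
      apply hβ
      refine ⟨(m : ℚ) / n, ?_⟩
      have ha' : a = 1 / n := by
        field_simp [zsmul_eq_mul] at hn ⊢
        rw [zsmul_eq_mul] at hn
        linarith [hn, mul_comm a (n:ℝ)]
      rw [← hm, ha', zsmul_eq_mul]
      push_cast
      field_simp
  have hcont : Continuous (fun x : ℝ => (x : AddCircle (1:ℝ))) := continuous_quotient_mk'
  have hsurj : Function.Surjective (fun x : ℝ => (x : AddCircle (1:ℝ))) :=
    fun q => QuotientAddGroup.induction_on q (fun x => ⟨x, rfl⟩)
  have himg : Dense ((fun x : ℝ => (x : AddCircle (1:ℝ))) ''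
      ((AddSubgroup.closure {β, 1} : AddSubgroup ℝ) : Set ℝ)) :=
    hsurj.denseRange.dense_image hcont hS
  have hsub : ((fun x : ℝ => (x : AddCircle (1:ℝ))) ''
      ((AddSubgroup.closure {β, 1} : AddSubgroup ℝ) : Set ℝ)) ⊆
      Set.range (fun z : ℤ => z • (β : AddCircle (1:ℝ))) := by
    rintro _ ⟨y, hy, rfl⟩
    rw [SetLike.mem_coe, AddSubgroup.mem_closure_pair] at hy
    obtain ⟨m, n, rfl⟩ := hy
    refine ⟨m, ?_⟩
    show m • (β : AddCircle (1:ℝ)) = ((m • β + n • (1:ℝ) : ℝ) : AddCircle (1:ℝ))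
    have h1 : ((1:ℝ) : AddCircle (1:ℝ)) = 0 := AddCircle.coe_period 1
    rw [AddCircle.coe_add, AddCircle.coe_zsmul (p := (1:ℝ)), AddCircle.coe_zsmul (p := (1:ℝ)),
      h1, smul_zero, add_zero]
  exact himg.mono hsub

lemma stmt5_freq {b : AddCircle (1:ℝ)} (hb : DenseRange (fun n : ℕ => n • b))
    (z : AddCircle (1:ℝ)) {ε : ℝ} (hε : 0 < ε) :
    ∃ᶠ m : ℕ in Filter.atTop, dist (m • b) z < ε := by
  rw [Filter.frequently_atTop]
  intro N
  obtain ⟨m, hm⟩ := hb.exists_dist_lt (z - N • b) hε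
  refine ⟨m + N, le_add_self, ?_⟩
  have hdr := dist_add_right (m • b) (z - N • b) (N • b)
  rw [sub_add_cancel] at hdr
  rw [add_nsmul, hdr, dist_comm]
  exact hm

/-- If `α` has an irrational coordinate, there are radii with `∑ rₙ^d = ∞` whose limsup
target set for the translation `T_α` is empty, for every center `x₀`. -/
theorem stmt5 (d : ℕ) (hd : 0 < d) (α : Fin d → ℝ) (hα : ∃ i, Irrational (α i)) :
    ∃ r : ℕ → ℝ, (∀ n, 0 ≤ r n) ∧ ¬ Summable (fun n => r n ^ d) ∧
      ∀ x₀ : Fin d → AddCircle (1:ℝ),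
        {x : Fin d → AddCircle (1:ℝ) | ∃ᶠ n in atTop,
          (fun y => y + fun i => ((α i : ℝ) : AddCircle (1:ℝ)))^[n] x ∈ ball x₀ (r n)} = ∅ := by

  classical
  obtain ⟨i, hi⟩ := hα
  set a : Fin d → AddCircle (1:ℝ) := fun j => ((α j : ℝ) : AddCircle (1:ℝ)) with hadef
  set b : AddCircle (1:ℝ) := ((α i : ℝ) : AddCircle (1:ℝ)) with hbdef
  have hb : DenseRange (fun n : ℕ => n • b) := stmt5_dense hi
  -- radii scale
  set ρ : ℕ → ℝ := fun k => (1/5) * (((k:ℝ)+1)⁻¹ ^ ((d:ℝ)⁻¹)) with hρdef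
  have hbase : ∀ k : ℕ, (0:ℝ) < ((k:ℝ)+1)⁻¹ := fun k => by positivity
  have hρpos : ∀ k, 0 < ρ k := by
    intro k
    have h2 := Real.rpow_pos_of_pos (hbase k) ((d:ℝ)⁻¹)
    rw [hρdef]; positivity
  have hρle : ∀ k, ρ k ≤ 1/5 := by
    intro k
    have hx1 : ((k:ℝ)+1)⁻¹ ≤ 1 := by
      rw [inv_le_one_iff₀]; right; linarith [Nat.cast_nonneg (α := ℝ) k]
    have h1 : (((k:ℝ)+1)⁻¹ ^ ((d:ℝ)⁻¹)) ≤ 1 :=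
      Real.rpow_le_one (hbase k).le hx1 (by positivity)
    rw [hρdef]
    nlinarith [h1]
  have hρpow : ∀ k, ρ k ^ d = (1/5:ℝ)^d * ((k:ℝ)+1)⁻¹ := by
    intro k
    rw [hρdef]
    simp only
    rw [mul_pow, Real.rpow_inv_natCast_pow (hbase k).le hd.ne']
  have h4ρ : ∀ c : ℝ, 0 < c → ∀ᶠ k in atTop, 4 * ρ k < c := by
    intro c hc
    have h0 : Tendsto (fun k : ℕ => (1/5:ℝ)^d * ((k:ℝ)+1)⁻¹) atTop (𝓝 0) := by
      have h1 := tendsto_one_div_add_atTop_nhds_zero_nat.const_mul ((1/5:ℝ)^d)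
      simpa [one_div] using h1
    have hcd : (0:ℝ) < (c/4)^d := by positivity
    filter_upwards [h0.eventually (gt_mem_nhds hcd)] with k hk
    by_contra hcon
    push_neg at hcon
    have h2 : c/4 ≤ ρ k := by linarith
    have h3 := pow_le_pow_left₀ (by positivity) h2 d
    rw [hρpow k] at h3
    linarith
  -- choose hitting times
  have hfreq : ∀ k : ℕ, ∃ᶠ m : ℕ in atTop,
      dist (m • b) (((5/2 * ρ k : ℝ) : AddCircle (1:ℝ))) < ρ k / 2 :=
    fun k => stmt5_freq hb _ (by linarith [hρpos k])
  obtain ⟨f, hfmono, hfdist⟩ := extraction_forall_of_frequently hfreq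
  set r : ℕ → ℝ := fun m => if h : ∃ k, f k = m then ρ h.choose else 0 with hrdef
  have hrf : ∀ k, r (f k) = ρ k := by
    intro k
    have hex : ∃ j, f j = f k := ⟨k, rfl⟩
    have hch : hex.choose = k := hfmono.injective hex.choose_spec
    rw [hrdef]
    simp only
    rw [dif_pos hex, hch]
  have hr0 : ∀ m, 0 ≤ r m := by
    intro m
    rw [hrdef]
    simp only
    split
    · exact (hρpos _).le
    · exact le_refl 0
  have hrz : ∀ m, (¬ ∃ k, f k = m) → r m = 0 := by
    intro m h
    rw [hrdef]
    simp only
    rw [dif_neg h]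
  refine ⟨r, hr0, ?_, ?_⟩
  · -- not summable
    intro hsum
    have h1 : Summable ((fun n => r n ^ d) ∘ f) := hsum.comp_injective hfmono.injective
    have h2 : Summable (fun k : ℕ => (1/5:ℝ)^d * ((k:ℝ)+1)⁻¹) := by
      refine h1.congr fun k => ?_
      show r (f k) ^ d = _
      rw [hrf k, hρpow k]
    have h3 : Summable (fun k : ℕ => ((k:ℝ)+1)⁻¹) :=
      (summable_mul_left_iff (by positivity : ((1:ℝ)/5)^d ≠ 0)).mp h2
    have h4 : Summable (fun k : ℕ => ((k+1:ℕ):ℝ)⁻¹) := by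
      refine h3.congr fun k => ?_
      push_cast
      ring
    have h5 : Summable (fun k : ℕ => ((k:ℕ):ℝ)⁻¹) := (summable_nat_add_iff 1).mp h4
    exact Real.not_summable_natCast_inv h5
  · -- empty limsup
    intro x₀
    rw [Set.eq_empty_iff_forall_notMem]
    intro x hx
    simp only [Set.mem_setOf_eq] at hx
    set c := dist (x i) (x₀ i) with hcdef
    have key : ∀ n : ℕ, (fun y => y + a)^[n] x ∈ ball x₀ (r n) →
        ∃ k, f k = n ∧ ρ k < c ∧ c < 4 * ρ k := by
      intro n hn
      rw [add_right_iterate, mem_ball] at hn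
      have hrpos : 0 < r n := lt_of_le_of_lt dist_nonneg hn
      have hex : ∃ k, f k = n := by
        by_contra h
        rw [hrz n h] at hrpos
        exact lt_irrefl 0 hrpos
      obtain ⟨k, hk⟩ := hex
      have hrn : r n = ρ k := by rw [← hk, hrf]
      rw [hrn] at hn
      have hcoord : dist ((x + n • a) i) (x₀ i) < ρ k :=
        lt_of_le_of_lt (dist_le_pi_dist _ _ i) hn
      have happ : (x + n • a) i = x i + n • b := rfl
      rw [happ] at hcoord
      -- norm bounds for w := n • b
      have hzn : ‖(((5/2 * ρ k : ℝ)) : AddCircle (1:ℝ))‖ = 5/2 * ρ k := by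
        have habs : |5/2 * ρ k| ≤ |(1:ℝ)|/2 := by
          rw [abs_of_nonneg (by linarith [hρpos k]), abs_one]
          linarith [hρle k]
        rw [(AddCircle.norm_coe_eq_abs_iff 1 one_ne_zero).mpr habs,
          abs_of_nonneg (by linarith [hρpos k])]
      have hd1 : dist (n • b) (((5/2 * ρ k : ℝ)) : AddCircle (1:ℝ)) < ρ k / 2 := by
        rw [← hk]; exact hfdist k
      have hwnorm : |‖n • b‖ - ‖(((5/2 * ρ k : ℝ)) : AddCircle (1:ℝ))‖| ≤
          dist (n • b) (((5/2 * ρ k : ℝ)) : AddCircle (1:ℝ)) := by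
        rw [dist_eq_norm]
        exact abs_norm_sub_norm_le _ _
      rw [hzn] at hwnorm
      have hwabs := abs_lt.mp (lt_of_le_of_lt hwnorm hd1)
      have hwlow : 2 * ρ k < ‖n • b‖ := by linarith [hwabs.1]
      have hwhigh : ‖n • b‖ < 3 * ρ k := by linarith [hwabs.2]
      have e1 : dist (x i + n • b) (x i) = ‖n • b‖ := by
        rw [dist_self_add_left]
      have t1 : ‖n • b‖ ≤ dist (x i + n • b) (x₀ i) + c := by
        calc ‖n • b‖ = dist (x i + n • b) (x i) := e1.symm
          _ ≤ dist (x i + n • b) (x₀ i) + dist (x₀ i) (x i) := dist_triangle _ _ _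
          _ = dist (x i + n • b) (x₀ i) + c := by rw [dist_comm (x₀ i) (x i)]
      have t2 : c ≤ ‖n • b‖ + dist (x i + n • b) (x₀ i) := by
        calc c = dist (x i) (x₀ i) := rfl
          _ ≤ dist (x i) (x i + n • b) + dist (x i + n • b) (x₀ i) := dist_triangle _ _ _
          _ = ‖n • b‖ + dist (x i + n • b) (x₀ i) := by rw [dist_comm (x i) (x i + n • b), e1]
      exact ⟨k, hk, by linarith, by linarith⟩
    obtain ⟨n0, hn0⟩ := hx.exists
    obtain ⟨k0, -, hk0c, -⟩ := key _ hn0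
    have hc : 0 < c := lt_trans (hρpos k0) hk0c
    obtain ⟨K, hK⟩ := eventually_atTop.mp (h4ρ c hc)
    obtain ⟨n, hnK, hn⟩ := frequently_atTop.mp hx (f K)
    obtain ⟨k, hkn, hkc, hck⟩ := key n hn
    have hKk : K ≤ k := by
      by_contra h
      push_neg at h
      have := hfmono h
      rw [hkn] at this
      omega
    linarith [hK k hKk]
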